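/- arXiv:1011.5551 — 2 statements merged into one kernel-verified Lean document; each statement's English description precedes it below -/
import Mathlib

section
/- Let (W, S) be a Coxeter system with length function ℓ, let X, X' ⊆ S, and let W_X and W_{X'} be the standard parabolic subgroups of W generated by X and X' respectively. For w ∈ W, let w^X denote the unique element of minimal length in the coset wW_X. Assume that the subgroup W_{X'} is finite. Then for every w ∈ W, the set {(vw)^X : v ∈ W_{X'}} contains a unique element of maximal length; that is, there exists a unique u in this set with ℓ(u') ≤ ℓ(u) for all u' in this set. (Part (ii) of the lemma of Richarz/Waldspurger on double coset representatives, stated in the paper for the Iwahori–Weyl group with W^{K'} and W^K attached to parahoric subgroups; here formulated for the underlying Coxeter group, to which it reduces, the finiteness of W_{X'} corresponding to K' being parahoric.) -/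
open scoped Pointwise
open List
set_option linter.unusedSectionVars false
set_option maxHeartbeats 1000000
namespace RW
open CoxeterSystem

section cnt
variable {W : Type*} [Group W]




open Classical in
/-- mod-2 count of `t` in a list. -/
noncomputable def cnt (t : W) : List W → ZMod 2
  | [] => 0
  | x :: l => (if x = t then 1 else 0) + cnt t l


lemma cnt_nil (t : W) : cnt t ([] : List W) = 0 := rfl

open Classical in
lemma cnt_cons (t x : W) (l : List W) :
    cnt t (x :: l) = (if x = t then 1 else 0) + cnt t l := by
  simp [cnt]

lemma cnt_append (t : W) (l₁ l₂ : List W) :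
    cnt t (l₁ ++ l₂) = cnt t l₁ + cnt t l₂ := by
  induction l₁ with
  | nil => simp [cnt]
  | cons x l ih => simp [cnt_cons, ih, add_assoc]

lemma mem_of_cnt_ne_zero {t : W} {l : List W} (h : cnt t l ≠ 0) : t ∈ l := by
  induction l with
  | nil => simp [cnt_nil] at h
  | cons x l ih =>
    rw [cnt_cons] at h
    by_cases hx : x = t
    · simp [hx]
    · simp only [hx, if_false, zero_add] at h
      exact List.mem_cons_of_mem _ (ih h)

lemma cnt_eq_zero_of_not_mem {t : W} {l : List W} (h : t ∉ l) : cnt t l = 0 := by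
  induction l with
  | nil => rfl
  | cons x l ih =>
    rw [cnt_cons]
    rw [List.mem_cons, not_or] at h
    simp [Ne.symm h.1, ih h.2]

lemma cnt_eq_one_of_nodup_mem {t : W} {l : List W} (hn : l.Nodup) (h : t ∈ l) :
    cnt t l = 1 := by
  induction l with
  | nil => simp at h
  | cons x l ih =>
    rw [cnt_cons]
    rcases List.mem_cons.mp h with rfl | h'
    · rw [if_pos rfl, cnt_eq_zero_of_not_mem (List.nodup_cons.mp hn).1, add_zero]
    · have hx : x ≠ t := by
        rintro rfl; exact (List.nodup_cons.mp hn).1 h'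
      rw [if_neg hx, zero_add]
      exact ih (List.nodup_cons.mp hn).2 h'

lemma cnt_map_conj (t : W) (l : List W) (g : W) :
    cnt t (l.map (fun x => g⁻¹ * x * g)) = cnt (g * t * g⁻¹) l := by
  induction l with
  | nil => rfl
  | cons x l ih =>
    simp only [List.map_cons, cnt_cons, ih]
    congr 1
    by_cases hx : x = g * t * g⁻¹
    · rw [if_pos hx, if_pos]; rw [hx]; group
    · rw [if_neg hx, if_neg]
      intro hc
      apply hx
      have : g * (g⁻¹ * x * g) * g⁻¹ = g * t * g⁻¹ := by rw [hc]
      rw [← this]; group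


end cnt

section cox
variable {B : Type*} {W : Type*} [Group W] {M : CoxeterMatrix B} (cs : CoxeterSystem M W)

local prefix:100 "σ" => cs.simple
local prefix:100 "π" => cs.wordProd
local prefix:100 "ℓ" => cs.length




open Classical in
/-- The building block of the reflection-cocycle representation. -/
noncomputable def refAux (i : B) : W × ZMod 2 → W × ZMod 2 :=
  fun z => (σ i * z.1 * σ i, z.2 + if z.1 = σ i then 1 else 0)

open Classical in
lemma refAux_invol (i : B) : Function.Involutive (refAux cs i) := by
  intro z
  unfold refAux
  have h1 : σ i * (σ i * z.1 * σ i) * σ i = z.1 := by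
    rw [← mul_assoc, ← mul_assoc]
    rw [cs.simple_mul_simple_self i, one_mul, mul_assoc, cs.simple_mul_simple_self i, mul_one]
  have h2 : (σ i * z.1 * σ i = σ i) ↔ (z.1 = σ i) := by
    constructor
    · intro h
      have := congrArg (fun y => σ i * y * σ i) h
      simpa [h1, cs.simple_mul_simple_self i, mul_assoc] using this
    · rintro h; rw [h]
      rw [cs.simple_mul_simple_self i, one_mul]
  ext
  · exact h1
  · show z.2 + _ + _ = z.2
    have h11 : (1 : ZMod 2) + 1 = 0 := by decide
    by_cases hz : z.1 = σ i
    · rw [if_pos hz, if_pos (h2.mpr hz)]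
      rw [add_assoc, h11, add_zero]
    · rw [if_neg hz, if_neg (fun hc => hz (h2.mp hc))]
      simp

/-- The reflection-cocycle permutation attached to a simple reflection. -/
noncomputable def refPerm (i : B) : Equiv.Perm (W × ZMod 2) :=
  Function.Involutive.toPerm _ (refAux_invol cs i)

lemma refPerm_apply (i : B) (z : W × ZMod 2) : refPerm cs i z = refAux cs i z := rfl

open Classical in
lemma refPerm_mul_pow_apply (i i' : B) (k : ℕ) (z : W × ZMod 2) :
    ((refPerm cs i * refPerm cs i') ^ k) z =
      ((σ i * σ i') ^ k * z.1 * ((σ i * σ i') ^ k)⁻¹,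
        z.2 + ∑ j ∈ Finset.range (2 * k), if z.1 = σ i' * (σ i * σ i') ^ j then 1 else 0) := by
  set a := σ i with ha
  set b := σ i' with hb
  have hinv : (a * b)⁻¹ = b * a := by
    rw [mul_inv_rev, ha, hb, cs.inv_simple, cs.inv_simple]
  have hbb : b * b = 1 := cs.simple_mul_simple_self i'
  have haa : a * a = 1 := cs.simple_mul_simple_self i
  have KEY : ∀ j : ℕ, (a*b)⁻¹ * (b * (a*b) ^ j) * (a*b) = b * (a*b) ^ (2 + j) := by
    intro j
    have h1 : (a*b) ^ j * (a*b) = (a*b) * (a*b) ^ j := by rw [← pow_succ, ← pow_succ']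
    calc (a*b)⁻¹ * (b * (a*b) ^ j) * (a*b)
        = (b*a) * (b * ((a*b) ^ j * (a*b))) := by rw [hinv]; simp only [mul_assoc]
      _ = (b*a) * (b * ((a*b) * (a*b) ^ j)) := by rw [h1]
      _ = b * (a*b) ^ (2 + j) := by rw [pow_add, pow_two]; simp only [mul_assoc]
  induction k generalizing z with
  | zero => simp
  | succ k ih =>
    have key : ((refPerm cs i * refPerm cs i') ^ (k+1)) z
        = ((refPerm cs i * refPerm cs i') ^ k) ((refPerm cs i * refPerm cs i') z) := by
      rw [pow_succ]
      rfl
    rw [key, ih _]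
    have hmulz : ((refPerm cs i * refPerm cs i') z)
        = ((a * b) * z.1 * (a * b)⁻¹,
           z.2 + ((if z.1 = b * (a * b) ^ 0 then (1 : ZMod 2) else 0)
                + (if z.1 = b * (a * b) ^ 1 then (1 : ZMod 2) else 0))) := by
      show refPerm cs i (refPerm cs i' z) = _
      rw [refPerm_apply, refPerm_apply]
      unfold refAux
      ext
      · show a * (b * z.1 * b) * a = _
        rw [hinv]
        group
      · show z.2 + _ + _ = z.2 + _
        rw [add_assoc]
        congr 1
        congr 1
        · rw [pow_zero, mul_one]
        · have hiff : (b * z.1 * b = a) ↔ (z.1 = b * (a * b) ^ 1) := by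
            have hx : b * (a * b) ^ 1 = b * a * b := by rw [pow_one]; group
            rw [hx]
            constructor
            · intro h
              have : b * (b * z.1 * b) * b = b * a * b := by rw [h]
              calc z.1 = (b*b) * z.1 * (b*b) := by rw [hbb]; group
                _ = b * (b * z.1 * b) * b := by group
                _ = b * a * b := this
            · intro h
              rw [h]
              calc b * (b * a * b) * b = (b*b) * a * (b*b) := by group
                _ = a := by rw [hbb]; group
          by_cases hz : b * z.1 * b = a
          · rw [if_pos hz, if_pos (hiff.mp hz)]
          · rw [if_neg hz, if_neg (fun hc => hz (hiff.mpr hc))]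
    rw [hmulz]
    ext
    · show (a*b) ^ k * ((a*b) * z.1 * (a*b)⁻¹) * ((a*b) ^ k)⁻¹ = _
      rw [pow_succ]
      simp only [mul_inv_rev, mul_assoc]
    · show z.2 + _ + _ = z.2 + _
      rw [add_assoc]
      congr 1
      have h2k : 2 * (k + 1) = 2 + 2 * k := by ring
      rw [h2k, Finset.sum_range_add]
      congr 1
      · rw [Finset.sum_range_succ, Finset.sum_range_one]
      · apply Finset.sum_congr rfl
        intro j _
        have hiff : ((a*b) * z.1 * (a*b)⁻¹ = b * (a*b) ^ j)
            ↔ (z.1 = b * (a*b) ^ (2 + j)) := by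
          rw [← KEY j]
          constructor
          · intro h
            rw [← h]
            group
          · intro h
            rw [h]
            group
        by_cases hz : (a*b) * z.1 * (a*b)⁻¹ = b * (a*b) ^ j
        · rw [if_pos hz, if_pos (hiff.mp hz)]
        · rw [if_neg hz, if_neg (fun hc => hz (hiff.mpr hc))]

open Classical in
lemma refPerm_liftable : M.IsLiftable (fun i => refPerm cs i) := by
  intro i i'
  rcases Nat.eq_zero_or_pos (M i i') with h0 | hpos
  · simp [h0]
  · set m := M i i' with hm
    apply Equiv.ext
    intro z
    rw [refPerm_mul_pow_apply]
    have ha : (σ i * σ i') ^ m = 1 := cs.simple_mul_simple_pow i i'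
    have hsum : (∑ j ∈ Finset.range (2 * m),
        if z.1 = σ i' * (σ i * σ i') ^ j then (1 : ZMod 2) else 0) = 0 := by
      have h2m : 2 * m = m + m := by ring
      rw [h2m, Finset.sum_range_add]
      have heq : (∑ j ∈ Finset.range m, if z.1 = σ i' * (σ i * σ i') ^ (m + j)
            then (1 : ZMod 2) else 0)
          = ∑ j ∈ Finset.range m, if z.1 = σ i' * (σ i * σ i') ^ j then (1 : ZMod 2) else 0 := by
        apply Finset.sum_congr rfl
        intro j _
        rw [pow_add, ha, one_mul]
      rw [heq]
      exact CharTwo.add_self_eq_zero _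
    rw [ha, hsum]
    simp


/-- The reflection-cocycle representation. -/
noncomputable def refRep : W →* Equiv.Perm (W × ZMod 2) :=
  cs.lift ⟨fun i => refPerm cs i, refPerm_liftable cs⟩

lemma refRep_simple (i : B) : refRep cs (σ i) = refPerm cs i :=
  cs.lift_apply_simple _ i

lemma rightInvSeq_cons (i : B) (ω : List B) :
    cs.rightInvSeq (i :: ω) = ((π ω)⁻¹ * σ i * π ω) :: cs.rightInvSeq ω := rfl

open Classical in
lemma refRep_wordProd (ω : List B) (z : W × ZMod 2) :
    refRep cs (π ω) z = (π ω * z.1 * (π ω)⁻¹, z.2 + cnt z.1 (cs.rightInvSeq ω)) := by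
  induction ω generalizing z with
  | nil => simp [cnt_nil]
  | cons i ω ih =>
    rw [cs.wordProd_cons, map_mul, refRep_simple]
    have : (refPerm cs i * refRep cs (π ω)) z = refPerm cs i (refRep cs (π ω) z) := rfl
    rw [this, ih]
    rw [refPerm_apply]
    unfold refAux
    rw [rightInvSeq_cons]
    ext
    · show σ i * (π ω * z.1 * (π ω)⁻¹) * σ i = (σ i * π ω) * z.1 * (σ i * π ω)⁻¹
      rw [mul_inv_rev, cs.inv_simple]
      simp only [mul_assoc]
    · show z.2 + cnt z.1 (cs.rightInvSeq ω) + _ = z.2 + cnt z.1 (_ :: cs.rightInvSeq ω)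
      rw [cnt_cons, add_assoc]
      congr 1
      rw [add_comm]
      congr 1
      have hiff : (π ω * z.1 * (π ω)⁻¹ = σ i) ↔ ((π ω)⁻¹ * σ i * π ω = z.1) := by
        constructor
        · intro h
          rw [← h]; group
        · intro h
          rw [← h]; group
      by_cases hc : π ω * z.1 * (π ω)⁻¹ = σ i
      · rw [if_pos hc, if_pos (hiff.mp hc)]
      · rw [if_neg hc, if_neg (fun hcc => hc (hiff.mpr hcc))]

/-- The parity of the number of times `t` occurs in the right inversion sequence of any
word for `w`. -/
noncomputable def eta (w t : W) : ZMod 2 := ((refRep cs w) (t, 0)).2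

lemma eta_eq_cnt {w : W} {ω : List B} (hω : π ω = w) (t : W) :
    eta cs w t = cnt t (cs.rightInvSeq ω) := by
  unfold eta
  rw [← hω, refRep_wordProd]
  simp

lemma refRep_apply (w x : W) (ε : ZMod 2) :
    refRep cs w (x, ε) = (w * x * w⁻¹, ε + eta cs w x) := by
  obtain ⟨ω, _, rfl⟩ := cs.exists_reduced_word' w
  rw [refRep_wordProd, eta_eq_cnt cs rfl]

lemma eta_cocycle (u v t : W) :
    eta cs (u * v) t = eta cs v t + eta cs u (v * t * v⁻¹) := by
  unfold eta
  rw [map_mul]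
  have : (refRep cs u * refRep cs v) (t, 0) = refRep cs u (refRep cs v (t, 0)) := rfl
  rw [this]
  have h1 : refRep cs v (t, 0) = (v * t * v⁻¹, eta cs v t) := by
    rw [refRep_apply]; simp
  rw [h1, refRep_apply]
  rfl

open Classical in
lemma eta_simple (i : B) (t : W) :
    eta cs (σ i) t = if t = σ i then 1 else 0 := by
  have h : π [i] = σ i := by simp
  rw [eta_eq_cnt cs h, cs.rightInvSeq_singleton, cnt_cons, cnt_nil, add_zero]
  by_cases hc : t = σ i
  · rw [if_pos hc, if_pos hc.symm]
  · rw [if_neg hc, if_neg (fun hcc => hc hcc.symm)]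

lemma eta_one (t : W) : eta cs 1 t = 0 := by
  have h : π ([] : List B) = 1 := by simp
  rw [eta_eq_cnt cs h]
  rfl

lemma eta_inv (w r : W) : eta cs w⁻¹ (w * r * w⁻¹) = eta cs w r := by
  have h := eta_cocycle cs w⁻¹ w r
  rw [inv_mul_cancel, eta_one] at h
  have := eq_neg_of_add_eq_zero_left h.symm
  rw [this, CharTwo.neg_eq]

lemma eta_refl_self {t : W} (ht : cs.IsReflection t) : eta cs t t = 1 := by
  obtain ⟨w, i, rfl⟩ := ht
  have key : w * σ i * w⁻¹ = (w * σ i) * w⁻¹ := by rw [mul_assoc]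
  rw [key, eta_cocycle]
  have h1 : w⁻¹ * (w * σ i * w⁻¹) * w⁻¹⁻¹ = σ i := by group
  rw [h1]
  have h2 : eta cs w⁻¹ (w * σ i * w⁻¹) = eta cs w (σ i) := eta_inv cs w (σ i)
  rw [h2, eta_cocycle, eta_simple]
  have h3 : σ i * σ i * (σ i)⁻¹ = σ i := by group
  rw [h3, if_pos rfl]
  rw [← add_assoc, add_comm (eta cs w (σ i)) 1, add_assoc, CharTwo.add_self_eq_zero, add_zero]

lemma zmod2_cases (x : ZMod 2) : x = 0 ∨ x = 1 := by
  fin_cases x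
  · exact Or.inl rfl
  · exact Or.inr rfl

lemma zmod2_ne_one {x : ZMod 2} (h : x ≠ 1) : x = 0 := by
  rcases zmod2_cases x with h0 | h1
  · exact h0
  · exact absurd h1 h

/-- Criterion for a simple right descent in terms of membership in the right
inversion sequence of a given reduced word. -/
lemma mem_rightInvSeq_of_isRightDescent {w : W} {ω : List B} (hred : cs.IsReduced ω)
    (hω : π ω = w) {i : B} (hlt : ℓ (w * σ i) < ℓ w) : σ i ∈ cs.rightInvSeq ω := by
  obtain ⟨ψ, hψred, hψ⟩ := cs.exists_reduced_word' (w * σ i)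
  have hπ : π (ψ ++ [i]) = w := by
    rw [cs.wordProd_append]
    simp [← hψ, mul_assoc]
  have hlen : (ψ ++ [i]).length = ℓ (w * σ i) + 1 := by
    rw [List.length_append, List.length_singleton, hψ, hψred]
  have hred2 : cs.IsReduced (ψ ++ [i]) := by
    unfold CoxeterSystem.IsReduced
    rw [hπ, hlen]
    have h1 : ℓ w ≤ ℓ (w * σ i) + 1 := by
      have := cs.length_wordProd_le (ψ ++ [i])
      rw [hπ, hlen] at this
      exact this
    omega
  have hmem : σ i ∈ cs.rightInvSeq (ψ ++ [i]) := by
    have : (ψ ++ [i]) = ψ.concat i := by simp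
    rw [this, cs.rightInvSeq_concat]
    simp
  have hcnt : cnt (σ i) (cs.rightInvSeq (ψ ++ [i])) = 1 :=
    cnt_eq_one_of_nodup_mem (hred2.nodup_rightInvSeq) hmem
  have heta : eta cs w (σ i) = 1 := by
    rw [eta_eq_cnt cs hπ]
    exact hcnt
  rw [eta_eq_cnt cs hω] at heta
  refine mem_of_cnt_ne_zero ?_
  rw [heta]
  decide

lemma eta_simple_eq_one_iff (w : W) (i : B) :
    ℓ (w * σ i) < ℓ w ↔ eta cs w (σ i) = 1 := by
  obtain ⟨ω, hred, rfl⟩ := cs.exists_reduced_word' w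
  constructor
  · intro hlt
    rw [eta_eq_cnt cs rfl]
    exact cnt_eq_one_of_nodup_mem hred.nodup_rightInvSeq
      (mem_rightInvSeq_of_isRightDescent cs hred rfl hlt)
  · intro heta
    have hmem : σ i ∈ cs.rightInvSeq ω := by
      refine mem_of_cnt_ne_zero ?_
      rw [← eta_eq_cnt cs rfl, heta]
      decide
    exact (cs.isRightInversion_of_mem_rightInvSeq hred hmem).2

/-- The key theorem: `t` is a right inversion of `w` iff the parity invariant is 1.
This contains the strong exchange property. -/
theorem eta_eq_one_iff : ∀ n w t, cs.IsReflection t → ℓ w = n →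
    (ℓ (w * t) < ℓ w ↔ eta cs w t = 1) := by
  intro n
  induction n using Nat.strong_induction_on with
  | _ n IH =>
    intro w t ht hlw
    classical
    rcases eq_or_ne w 1 with rfl | hw1
    · rw [cs.length_one]
      constructor
      · omega
      · intro h
        rw [eta_one] at h
        exact absurd h (by decide)
    · obtain ⟨i, hi⟩ := cs.exists_leftDescent_of_ne_one hw1
      rw [CoxeterSystem.IsLeftDescent] at hi
      set w₁ := σ i * w with hw₁def
      have hww : w = σ i * w₁ := by
        rw [hw₁def, ← mul_assoc, cs.simple_mul_simple_self, one_mul]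
      have hw1len : ℓ w₁ + 1 = ℓ w := by
        rcases cs.length_simple_mul w i with h | h
        · rw [← hw₁def] at h; omega
        · rw [← hw₁def] at h; omega
      set r' := w₁⁻¹ * σ i * w₁ with hr'def
      have hr' : cs.IsReflection r' := by
        have := (cs.isReflection_simple i).conj w₁⁻¹
        rwa [inv_inv] at this
      have hr'inv : r'⁻¹ = r' := hr'.inv
      have htinv : t⁻¹ = t := ht.inv
      have htt : t * t = 1 := by nth_rewrite 1 [← htinv]; exact inv_mul_cancel t
      have hcond : (w₁ * t * w₁⁻¹ = σ i) ↔ (t = r') := by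
        rw [hr'def]
        constructor
        · intro h
          rw [← h]; group
        · intro h
          rw [h]; group
      have hcoc : eta cs w t = eta cs w₁ t + (if t = r' then 1 else 0) := by
        rw [hww, eta_cocycle, eta_simple]
        congr 1
        by_cases hc : w₁ * t * w₁⁻¹ = σ i
        · rw [if_pos hc, if_pos (hcond.mp hc)]
        · rw [if_neg hc, if_neg (fun hcc => hc (hcond.mpr hcc))]
      by_cases htr : t = r'
      · -- t = r' : both sides are true
        have hwt : w * t = w₁ := by
          rw [htr, hr'def, hww]
          calc σ i * w₁ * (w₁⁻¹ * σ i * w₁) = (σ i * σ i) * w₁ := by group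
            _ = w₁ := by rw [cs.simple_mul_simple_self, one_mul]
        have hlhs : ℓ (w * t) < ℓ w := by
          rw [hwt]; omega
        have hw1t : ℓ (w₁ * t) = ℓ w := by
          have : w₁ * t = w := by
            rw [htr, hr'def]
            calc w₁ * (w₁⁻¹ * σ i * w₁) = σ i * w₁ := by group
              _ = w := hww.symm
          rw [this]
        have heta1 : eta cs w₁ t = 0 := by
          apply zmod2_ne_one
          intro hcontra
          have := (IH (ℓ w₁) (by omega) w₁ t ht rfl).mpr hcontra
          omega
        have hrhs : eta cs w t = 1 := by
          rw [hcoc, heta1, if_pos htr, zero_add]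
        exact iff_of_true hlhs hrhs
      · -- t ≠ r'
        have hcoc' : eta cs w t = eta cs w₁ t := by
          rw [hcoc, if_neg htr, add_zero]
        constructor
        · intro hlt
          -- show ℓ (w₁ * t) < ℓ w₁, then conclude by IH
          have hkey : ℓ (w₁ * t) < ℓ w₁ := by
            by_contra hge
            push_neg at hge
            have hne : ℓ (w₁ * t) ≠ ℓ w₁ := ht.length_mul_left_ne w₁
            -- so ℓ (w₁ * t) = ℓ w₁ + 1 = ℓ w
            have hub : ℓ (w₁ * t) ≤ ℓ w := by
              have h1 : w * t = σ i * (w₁ * t) := by rw [hww]; group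
              have h2 : ℓ (w * t) + 1 ≥ ℓ (w₁ * t) := by
                rcases cs.length_simple_mul (w₁ * t) i with h | h
                · rw [← h1] at h; omega
                · rw [← h1] at h; omega
              omega
            have hw1teq : ℓ (w₁ * t) = ℓ w := by omega
            -- u := w * t
            set u := w * t with hudef
            have huval : ℓ u = ℓ w₁ := by
              have h1 : u = σ i * (w₁ * t) := by rw [hudef, hww]; group
              have h2 : ℓ u + 1 ≥ ℓ (w₁ * t) := by
                rcases cs.length_simple_mul (w₁ * t) i with h | h
                · rw [← h1] at h; omega
                · rw [← h1] at h; omega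
              omega
            have hut : eta cs u t = 0 := by
              apply zmod2_ne_one
              intro hcontra
              have hudesc := (IH (ℓ u) (by omega) u t ht rfl).mpr hcontra
              have : u * t = w := by rw [hudef, mul_assoc, htt, mul_one]
              rw [this] at hudesc
              omega
            -- w₁ = σ i * (u * t)
            have hw₁eq : w₁ = σ i * (u * t) := by
              rw [hudef]
              have : w * t * t = w := by rw [mul_assoc, htt, mul_one]
              rw [this, hw₁def]
            have hetaw₁ : eta cs w₁ t = 1 := by
              rw [hw₁eq, eta_cocycle]
              have e1 : eta cs (u * t) t = 1 := by
                rw [eta_cocycle, eta_refl_self cs ht]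
                have : t * t * t⁻¹ = t := by group
                rw [this, hut, add_zero]
              rw [e1]
              have e2 : eta cs (σ i) (u * t * t * (u * t)⁻¹) = 0 := by
                have hsimp : u * t * t * (u * t)⁻¹ = u * t * u⁻¹ := by
                  calc u * t * t * (u * t)⁻¹ = u * (t * t) * (u * t)⁻¹ := by group
                    _ = u * (t⁻¹ * u⁻¹) := by rw [htt, mul_one, mul_inv_rev]
                    _ = u * t * u⁻¹ := by rw [htinv, ← mul_assoc]
                rw [hsimp, eta_simple, if_neg]
                intro hcontra
                -- u * t * u⁻¹ = σ i  ⇒  t = r', contradiction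
                apply htr
                have h1 : t = u⁻¹ * σ i * u := by
                  rw [← hcontra]; group
                have h2 : u⁻¹ * σ i * u = t * r' * t := by
                  rw [hudef, hww, hr'def]
                  rw [mul_inv_rev]
                  have : (σ i * w₁)⁻¹ * σ i * (σ i * w₁) = w₁⁻¹ * σ i * w₁ := by
                    rw [mul_inv_rev, cs.inv_simple]
                    calc w₁⁻¹ * σ i * σ i * (σ i * w₁)
                        = w₁⁻¹ * (σ i * σ i) * σ i * w₁ := by group
                      _ = w₁⁻¹ * σ i * w₁ := by rw [cs.simple_mul_simple_self]; group
                  calc t⁻¹ * (σ i * w₁)⁻¹ * σ i * (σ i * w₁ * t)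
                      = t⁻¹ * ((σ i * w₁)⁻¹ * σ i * (σ i * w₁)) * t := by group
                    _ = t⁻¹ * (w₁⁻¹ * σ i * w₁) * t := by rw [this]
                    _ = t * (w₁⁻¹ * σ i * w₁) * t := by rw [htinv]
                have h3 : t = t * r' * t := h1.trans h2
                have h4 : r' = t := by
                  calc r' = t⁻¹ * (t * r' * t) * t⁻¹ := by group
                    _ = t⁻¹ * t * t⁻¹ := by rw [← h3]
                    _ = t⁻¹ := by group
                    _ = t := htinv
                exact h4.symm
              rw [e2, add_zero]
            have := (IH (ℓ w₁) (by omega) w₁ t ht rfl).mpr hetaw₁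
            omega
          rw [hcoc']
          exact (IH (ℓ w₁) (by omega) w₁ t ht rfl).mp hkey
        · intro heta
          rw [hcoc'] at heta
          have hdesc := (IH (ℓ w₁) (by omega) w₁ t ht rfl).mpr heta
          have h1 : w * t = σ i * (w₁ * t) := by rw [hww]; group
          have h2 : ℓ (w * t) ≤ ℓ (w₁ * t) + 1 := by
            rcases cs.length_simple_mul (w₁ * t) i with h | h
            · rw [← h1] at h; omega
            · rw [← h1] at h; omega
          omega



/-! ### Corollaries: strong exchange with erasure, lifting property -/

theorem strongExchange_mem {w t : W} (ht : cs.IsReflection t) {ω : List B}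
    (hω : π ω = w) (hlt : ℓ (w * t) < ℓ w) : t ∈ cs.rightInvSeq ω := by
  have h := (eta_eq_one_iff cs (ℓ w) w t ht rfl).mp hlt
  rw [eta_eq_cnt cs hω] at h
  refine mem_of_cnt_ne_zero ?_
  rw [h]; decide

theorem strongExchange_erase {w t : W} (ht : cs.IsReflection t) {ω : List B}
    (hω : π ω = w) (hlt : ℓ (w * t) < ℓ w) :
    ∃ j < ω.length, w * t = π (ω.eraseIdx j) := by
  have hmem := strongExchange_mem cs ht hω hlt
  obtain ⟨j, hj, hget⟩ := List.mem_iff_getElem.mp hmem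
  have hjlen : j < ω.length := by
    have := cs.length_rightInvSeq ω
    omega
  refine ⟨j, hjlen, ?_⟩
  have hkey := cs.wordProd_mul_getD_rightInvSeq ω j
  rw [hω] at hkey
  rw [← hkey]
  congr 1
  rw [List.getD_eq_getElem _ _ hj, hget]

theorem strongExchange_left_erase {w t : W} (ht : cs.IsReflection t) {ω : List B}
    (hω : π ω = w) (hlt : ℓ (t * w) < ℓ w) :
    ∃ j < ω.length, t * w = π (ω.eraseIdx j) := by
  have hπrev : π ω.reverse = w⁻¹ := by rw [cs.wordProd_reverse, hω]
  have hlen : ℓ (w⁻¹ * t) < ℓ w⁻¹ := by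
    have h1 : ℓ (w⁻¹ * t) = ℓ (t * w) := by
      rw [← cs.length_inv (w⁻¹ * t), mul_inv_rev, inv_inv, ht.inv]
    rw [h1, cs.length_inv]
    exact hlt
  have hmem := strongExchange_mem cs ht hπrev hlen
  rw [cs.rightInvSeq_reverse, List.mem_reverse] at hmem
  obtain ⟨j, hj, hget⟩ := List.mem_iff_getElem.mp hmem
  have hjlen : j < ω.length := by
    have := cs.length_leftInvSeq ω
    omega
  refine ⟨j, hjlen, ?_⟩
  have hkey := cs.getD_leftInvSeq_mul_wordProd ω j
  rw [hω] at hkey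
  rw [← hkey]
  congr 1
  rw [List.getD_eq_getElem _ _ hj, hget]

lemma rightInvSeq_append (ω₁ ω₂ : List B) :
    cs.rightInvSeq (ω₁ ++ ω₂) =
      (cs.rightInvSeq ω₁).map (fun x => (π ω₂)⁻¹ * x * π ω₂) ++ cs.rightInvSeq ω₂ := by
  induction ω₁ with
  | nil => simp
  | cons i ω₁ ih =>
    rw [List.cons_append, rightInvSeq_cons, rightInvSeq_cons, ih, List.map_cons,
      List.cons_append]
    congr 1
    rw [cs.wordProd_append, mul_inv_rev]
    simp only [mul_assoc]

/-- The lifting property ("Property Z"). -/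
theorem lifting {p E : W} {j : B} (hadd : ℓ (p * E) = ℓ p + ℓ E)
    (hps : ℓ p < ℓ (p * σ j)) (hsE : ℓ E < ℓ (σ j * E)) :
    ℓ (p * σ j * E) = ℓ p + ℓ E + 1 := by
  obtain ⟨ψ, hψred, hψ⟩ := cs.exists_reduced_word' p
  obtain ⟨φ, hφred, hφ⟩ := cs.exists_reduced_word' E
  have hπ : π (ψ ++ φ) = p * E := by rw [cs.wordProd_append, ← hψ, ← hφ]
  have hub : ℓ (p * σ j * E) ≤ ℓ p + ℓ E + 1 := by
    calc ℓ (p * σ j * E) ≤ ℓ (p * σ j) + ℓ E := cs.length_mul_le _ _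
      _ ≤ (ℓ p + 1) + ℓ E := by
          have := cs.length_mul_simple p j
          omega
      _ = ℓ p + ℓ E + 1 := by ring
  have hpar : ℓ (p * σ j * E) % 2 = (ℓ p + ℓ E + 1) % 2 := by
    have h1 := cs.length_mul_mod_two (p * σ j) E
    have h2 := cs.length_mul_mod_two p (σ j)
    have h3 : ℓ (σ j) = 1 := cs.length_simple j
    omega
  set t := E⁻¹ * σ j * E with htdef
  have ht : cs.IsReflection t := by
    have := (cs.isReflection_simple j).conj E⁻¹
    rwa [inv_inv] at this
  have hpet : (p * E) * t = p * σ j * E := by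
    rw [htdef]
    group
  by_contra hne
  have hlt : ℓ ((p * E) * t) < ℓ (p * E) := by
    rw [hpet, hadd]
    have hne2 : ℓ (p * σ j * E) ≠ ℓ p + ℓ E := by omega
    omega
  have hmem := strongExchange_mem cs ht hπ hlt
  rw [rightInvSeq_append] at hmem
  rcases List.mem_append.mp hmem with hmem1 | hmem2
  · obtain ⟨x, hx, hxe⟩ := List.mem_map.mp hmem1
    have hx2 : x = σ j := by
      have : (π φ) * t * (π φ)⁻¹ = (π φ) * ((π φ)⁻¹ * x * π φ) * (π φ)⁻¹ := by rw [hxe]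
      have h4 : (π φ) * t * (π φ)⁻¹ = σ j := by
        rw [htdef, ← hφ]
        group
      rw [h4] at this
      rw [this]
      group
    rw [hx2] at hx
    have hinv := cs.isRightInversion_of_mem_rightInvSeq hψred hx
    rw [← hψ] at hinv
    exact absurd hinv.2 (by omega)
  · have hinv := cs.isRightInversion_of_mem_rightInvSeq hφred hmem2
    rw [← hφ] at hinv
    have hEt : E * t = σ j * E := by rw [htdef]; group
    have h5 := hinv.2
    rw [hEt] at h5
    omega

/-! ### Words with letters in a subset, deletion, parabolic subgroups -/

/-- Every letter of `ω` lies in `X`. -/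
def IsXWord (X : Set B) (ω : List B) : Prop := ∀ i ∈ ω, i ∈ X

lemma wordProd_mem_closure {X : Set B} {ω : List B} (h : IsXWord X ω) :
    π ω ∈ Subgroup.closure (cs.simple '' X) := by
  induction ω with
  | nil => rw [cs.wordProd_nil]; exact Subgroup.one_mem _
  | cons i ω ih =>
    rw [cs.wordProd_cons]
    refine Subgroup.mul_mem _ ?_ (ih (fun x hx => h x (List.mem_cons_of_mem _ hx)))
    exact Subgroup.subset_closure ⟨i, h i (List.mem_cons_self), rfl⟩

lemma mem_closure_iff_word {X : Set B} {w : W} :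
    w ∈ Subgroup.closure (cs.simple '' X) ↔ ∃ ω, IsXWord X ω ∧ w = π ω := by
  constructor
  · intro hw
    induction hw using Subgroup.closure_induction with
    | mem x hx =>
      obtain ⟨i, hi, rfl⟩ := hx
      exact ⟨[i], fun l hl => by simpa using (List.mem_singleton.mp hl) ▸ hi, by simp⟩
    | one => exact ⟨[], fun l hl => by simp at hl, by simp⟩
    | mul x y hx hy ihx ihy =>
      obtain ⟨ω₁, h1, rfl⟩ := ihx
      obtain ⟨ω₂, h2, rfl⟩ := ihy
      exact ⟨ω₁ ++ ω₂, fun l hl => by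
        rcases List.mem_append.mp hl with h | h
        · exact h1 l h
        · exact h2 l h, by rw [cs.wordProd_append]⟩
    | inv x hx ihx =>
      obtain ⟨ω, h1, rfl⟩ := ihx
      exact ⟨ω.reverse, fun l hl => h1 l (List.mem_reverse.mp hl), by
        rw [cs.wordProd_reverse]⟩
  · rintro ⟨ω, hω, rfl⟩
    exact wordProd_mem_closure cs hω

lemma isReduced_nil : cs.IsReduced ([] : List B) := by
  unfold CoxeterSystem.IsReduced
  simp

/-- Deletion property: a non-reduced word can be shortened (to a sublist)
without changing the product. -/
theorem deletion {ω : List B} (h : ℓ (π ω) < ω.length) :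
    ∃ ω', ω'.Sublist ω ∧ ω'.length < ω.length ∧ π ω' = π ω := by
  have hωne : ω ≠ [] := by
    intro hc
    rw [hc] at h
    simp at h
  have hωred : ¬ cs.IsReduced ω := by
    unfold CoxeterSystem.IsReduced
    omega
  have hex : ∃ k, ¬ cs.IsReduced (ω.take (k+1)) := by
    refine ⟨ω.length - 1, ?_⟩
    have hlen1 : 1 ≤ ω.length := by
      cases ω with
      | nil => exact absurd rfl hωne
      | cons a l => simp
    rw [show ω.length - 1 + 1 = ω.length from by omega, List.take_length]
    exact hωred
  classical
  set k := Nat.find hex with hkdef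
  have hk : ¬ cs.IsReduced (ω.take (k+1)) := Nat.find_spec hex
  have hklen : k < ω.length := by
    have h1 : k ≤ ω.length - 1 := Nat.find_min' hex (by
      have hlen1 : 1 ≤ ω.length := by
        cases ω with
        | nil => exact absurd rfl hωne
        | cons a l => simp
      rw [show ω.length - 1 + 1 = ω.length from by omega, List.take_length]
      exact hωred)
    have hlen1 : 1 ≤ ω.length := by
      cases ω with
      | nil => exact absurd rfl hωne
      | cons a l => simp
    omega
  have hredk : cs.IsReduced (ω.take k) := by
    rcases Nat.eq_zero_or_pos k with hk0 | hkpos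
    · rw [hk0]
      simpa using isReduced_nil cs
    · have hmin := Nat.find_min hex (m := k - 1) (by omega)
      rw [show k - 1 + 1 = k from by omega] at hmin
      exact not_not.mp hmin
  have htake : (ω.take k).concat (ω.get ⟨k, hklen⟩) = ω.take (k+1) :=
    List.take_concat_get hklen
  have hπtake : π (ω.take (k+1)) = π (ω.take k) * σ (ω.get ⟨k, hklen⟩) := by
    rw [← htake, cs.wordProd_concat]
  have hlentake : (ω.take k).length = k := by
    rw [List.length_take]
    omega
  have hℓk : ℓ (π (ω.take k)) = k := by
    have := hredk
    unfold CoxeterSystem.IsReduced at this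
    rw [this, hlentake]
  have hdesc : ℓ (π (ω.take k) * σ (ω.get ⟨k, hklen⟩)) < ℓ (π (ω.take k)) := by
    rcases cs.length_mul_simple (π (ω.take k)) (ω.get ⟨k, hklen⟩) with hc | hc
    · exfalso
      apply hk
      unfold CoxeterSystem.IsReduced
      rw [hπtake, hc, hℓk, List.length_take]
      omega
    · omega
  obtain ⟨j, hj, herase⟩ := strongExchange_erase cs (cs.isReflection_simple _) rfl hdesc
  refine ⟨(ω.take k).eraseIdx j ++ ω.drop (k+1), ?_, ?_, ?_⟩
  · have h1 : ((ω.take k).eraseIdx j).Sublist (ω.take (k+1)) := by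
      refine (List.eraseIdx_sublist _ _).trans ?_
      rw [← htake, List.concat_eq_append]
      exact List.sublist_append_left _ _
    have h2 := List.Sublist.append h1 (List.Sublist.refl (ω.drop (k+1)))
    rwa [List.take_append_drop] at h2
  · rw [List.length_append, List.length_eraseIdx, List.length_drop, hlentake]
    rw [hlentake] at hj
    rw [if_pos hj]
    omega
  · rw [cs.wordProd_append, ← herase]
    conv_rhs => rw [← List.take_append_drop (k+1) ω]
    rw [cs.wordProd_append, hπtake]

/-! ### Reduced words in parabolic subgroups, Deodhar's lemma -/

theorem exists_reduced_X_word {X : Set B} {w : W}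
    (hw : w ∈ Subgroup.closure (cs.simple '' X)) :
    ∃ ω, IsXWord X ω ∧ cs.IsReduced ω ∧ w = π ω := by
  obtain ⟨ω₀, hX, rfl⟩ := (mem_closure_iff_word cs).mp hw
  suffices H : ∀ n (ω : List B), ω.length = n → IsXWord X ω →
      ∃ ω', IsXWord X ω' ∧ cs.IsReduced ω' ∧ π ω = π ω' by
    obtain ⟨ω', h1, h2, h3⟩ := H ω₀.length ω₀ rfl hX
    exact ⟨ω', h1, h2, h3⟩
  intro n
  induction n using Nat.strong_induction_on with
  | _ n IH =>
    intro ω hlen hXω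
    by_cases hred : cs.IsReduced ω
    · exact ⟨ω, hXω, hred, rfl⟩
    · have hlt : ℓ (π ω) < ω.length := by
        have := cs.length_wordProd_le ω
        unfold CoxeterSystem.IsReduced at hred
        omega
      obtain ⟨ω', hsub, hshort, hprod⟩ := deletion cs hlt
      obtain ⟨ω'', h1, h2, h3⟩ := IH ω'.length (by omega) ω' rfl
        (fun i hi => hXω i (hsub.subset hi))
      exact ⟨ω'', h1, h2, by rw [← hprod, h3]⟩

theorem exists_right_descent_X {X : Set B} {w : W}
    (hw : w ∈ Subgroup.closure (cs.simple '' X)) (hne : w ≠ 1) :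
    ∃ j ∈ X, ℓ (w * σ j) + 1 = ℓ w ∧ w * σ j ∈ Subgroup.closure (cs.simple '' X) := by
  obtain ⟨ω, hX, hred, rfl⟩ := exists_reduced_X_word cs hw
  have hωne : ω ≠ [] := by
    rintro rfl
    rw [cs.wordProd_nil] at hne
    exact hne rfl
  set j := ω.getLast hωne with hjdef
  have hsplit : ω.dropLast ++ [j] = ω := List.dropLast_append_getLast hωne
  have hprod : π ω * σ j = π ω.dropLast := by
    conv_lhs => rw [← hsplit]
    rw [cs.wordProd_append, cs.wordProd_singleton, mul_assoc, cs.simple_mul_simple_self,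
      mul_one]
  have hlendrop : ω.dropLast.length = ω.length - 1 := by
    rw [List.length_dropLast]
  have hlen : ℓ (π ω * σ j) ≤ ω.length - 1 := by
    rw [hprod]
    have := cs.length_wordProd_le ω.dropLast
    omega
  have hlw : ℓ (π ω) = ω.length := hred
  have homega1 : 1 ≤ ω.length := by
    cases ω with
    | nil => exact absurd rfl hωne
    | cons a l => simp
  refine ⟨j, hX j (List.getLast_mem hωne), ?_, ?_⟩
  · rcases cs.length_mul_simple (π ω) j with h | h
    · omega
    · omega
  · rw [hprod]
    exact wordProd_mem_closure cs (fun i hi => hX i ((List.dropLast_sublist ω).subset hi))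

theorem exists_left_descent_X {X : Set B} {w : W}
    (hw : w ∈ Subgroup.closure (cs.simple '' X)) (hne : w ≠ 1) :
    ∃ j ∈ X, ℓ (σ j * w) + 1 = ℓ w ∧ σ j * w ∈ Subgroup.closure (cs.simple '' X) := by
  have hwinv : w⁻¹ ∈ Subgroup.closure (cs.simple '' X) := Subgroup.inv_mem _ hw
  obtain ⟨j, hjX, hlen, hmem⟩ := exists_right_descent_X cs hwinv (by simpa using hne)
  have hkey : σ j * w = (w⁻¹ * σ j)⁻¹ := by
    rw [mul_inv_rev, inv_inv, cs.inv_simple]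
  refine ⟨j, hjX, ?_, ?_⟩
  · rw [hkey, cs.length_inv]
    rw [cs.length_inv] at hlen
    exact hlen
  · rw [hkey]
    exact Subgroup.inv_mem _ hmem

/-- Deodhar additivity: if `u` is of minimal length in its coset `u W_X`, then
lengths add: `ℓ(u x) = ℓ(u) + ℓ(x)` for all `x ∈ W_X`. -/
theorem deodhar_additive {X : Set B} {u : W}
    (hmin : ∀ x ∈ Subgroup.closure (cs.simple '' X), ℓ u ≤ ℓ (u * x)) :
    ∀ x ∈ Subgroup.closure (cs.simple '' X), ℓ (u * x) = ℓ u + ℓ x := by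
  suffices H : ∀ n x, x ∈ Subgroup.closure (cs.simple '' X) → ℓ x = n →
      ℓ (u * x) = ℓ u + ℓ x by
    intro x hx
    exact H (ℓ x) x hx rfl
  intro n
  induction n using Nat.strong_induction_on with
  | _ n IH =>
    intro x hx hlx
    rcases eq_or_ne x 1 with rfl | hne
    · simp
    · obtain ⟨j, hjX, hdesc, hmem⟩ := exists_right_descent_X cs hx hne
      set x' := x * σ j with hx'def
      have hxx : x' * σ j = x := by
        rw [hx'def, mul_assoc, cs.simple_mul_simple_self, mul_one]
      have hIH : ℓ (u * x') = ℓ u + ℓ x' := IH (ℓ x') (by omega) x' hmem rfl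
      have hux : u * x = (u * x') * σ j := by rw [← hxx, ← mul_assoc]
      rcases cs.length_mul_simple (u * x') j with hc | hc
      · rw [hux, hc, hIH]
        omega
      · -- descent case: contradiction
        exfalso
        obtain ⟨ω_u, hredu, hωu⟩ := cs.exists_reduced_word' u
        obtain ⟨ψ', hψX, hψred, hψ⟩ := exists_reduced_X_word cs hmem
        have hπ : π (ω_u ++ ψ') = u * x' := by
          rw [cs.wordProd_append, ← hωu, ← hψ]
        have hdesc2 : ℓ ((u * x') * σ j) < ℓ (u * x') := by omega
        obtain ⟨p, hp, herase⟩ := strongExchange_erase cs (cs.isReflection_simple j) hπ hdesc2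
        by_cases hpcase : p < ω_u.length
        · rw [List.eraseIdx_append_of_lt_length hpcase] at herase
          rw [cs.wordProd_append] at herase
          -- (u * x') * σ j = g * x' with g := π (ω_u.eraseIdx p)
          set g := π (ω_u.eraseIdx p) with hgdef
          have hg1 : u * x = g * x' := by
            rw [hux, herase, hψ]
          have hg2 : g = u * (x * x'⁻¹) := by
            rw [← mul_assoc, hg1]
            group
          have hxmem : x * x'⁻¹ ∈ Subgroup.closure (cs.simple '' X) :=
            Subgroup.mul_mem _ hx (Subgroup.inv_mem _ hmem)
          have hg3 : ℓ u ≤ ℓ g := by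
            rw [hg2]
            exact hmin _ hxmem
          have hg4 : ℓ g ≤ (ω_u.eraseIdx p).length := cs.length_wordProd_le _
          have hg5 : (ω_u.eraseIdx p).length = ω_u.length - 1 := by
            rw [List.length_eraseIdx, if_pos hpcase]
          have hg6 : ω_u.length = ℓ u := by
            rw [← hredu, hωu]
          omega
        · push_neg at hpcase
          rw [List.eraseIdx_append_of_length_le hpcase] at herase
          rw [cs.wordProd_append] at herase
          have hx2 : x = π (ψ'.eraseIdx (p - ω_u.length)) := by
            have h1 : u * x = u * π (ψ'.eraseIdx (p - ω_u.length)) := by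
              rw [hux, herase, hωu]
            exact mul_left_cancel h1
          have h3 : ℓ x ≤ (ψ'.eraseIdx (p - ω_u.length)).length := by
            rw [hx2]
            exact cs.length_wordProd_le _
          have h4 : (ψ'.eraseIdx (p - ω_u.length)).length ≤ ψ'.length := by
            rw [List.length_eraseIdx]
            split <;> omega
          have h5 : ψ'.length = ℓ x' := by rw [← hψred, hψ]
          -- need strict: p - ω_u.length < ψ'.length
          have hplen : p < ω_u.length + ψ'.length := by
            have := @List.length_append _ ω_u ψ'
            omega
          have h6 : (ψ'.eraseIdx (p - ω_u.length)).length = ψ'.length - 1 := by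
            rw [List.length_eraseIdx, if_pos (by omega)]
          omega

/-- Uniqueness of the minimal length element in a coset `u W_X`. -/
theorem min_coset_unique {X : Set B} {u₁ u₂ : W}
    (hcos : u₁⁻¹ * u₂ ∈ Subgroup.closure (cs.simple '' X))
    (hmin₁ : ∀ x ∈ Subgroup.closure (cs.simple '' X), ℓ u₁ ≤ ℓ (u₁ * x))
    (hmin₂ : ∀ x ∈ Subgroup.closure (cs.simple '' X), ℓ u₂ ≤ ℓ (u₂ * x)) :
    u₁ = u₂ := by
  set x := u₁⁻¹ * u₂ with hxdef
  have h1 : u₁ * x = u₂ := by rw [hxdef]; group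
  have h2 : u₂ * x⁻¹ = u₁ := by rw [hxdef]; group
  have ha1 : ℓ u₂ = ℓ u₁ + ℓ x := by
    rw [← h1]
    exact deodhar_additive cs hmin₁ x hcos
  have ha2 : ℓ u₁ = ℓ u₂ + ℓ x⁻¹ := by
    rw [← h2]
    exact deodhar_additive cs hmin₂ x⁻¹ (Subgroup.inv_mem _ hcos)
  rw [cs.length_inv] at ha2
  have hx0 : ℓ x = 0 := by omega
  have : x = 1 := cs.length_eq_zero_iff.mp hx0
  rw [← h1, this, mul_one]

/-- An element with no right `X`-descent is minimal in its coset `u W_X`. -/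
theorem min_of_no_descent {X : Set B} {u : W}
    (h : ∀ j ∈ X, ℓ u < ℓ (u * σ j)) :
    ∀ x ∈ Subgroup.closure (cs.simple '' X), ℓ u ≤ ℓ (u * x) := by
  -- pick a minimal-length element of the coset
  have hSne : (Set.image (fun x => ℓ (u * x)) (Subgroup.closure (cs.simple '' X) : Set W)).Nonempty := by
    exact ⟨ℓ (u * 1), ⟨1, Subgroup.one_mem _, rfl⟩⟩
  classical
  set n₀ := sInf (Set.image (fun x => ℓ (u * x)) (Subgroup.closure (cs.simple '' X) : Set W)) with hn₀
  obtain ⟨x₀, hx₀mem, hx₀⟩ := Nat.sInf_mem hSne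
  have hx₀' : ℓ (u * x₀) = n₀ := hx₀
  have hminall : ∀ y ∈ Subgroup.closure (cs.simple '' X), n₀ ≤ ℓ (u * y) := by
    intro y hy
    exact Nat.sInf_le ⟨y, hy, rfl⟩
  set u₀ := u * x₀ with hu₀def
  have hu₀min : ∀ y ∈ Subgroup.closure (cs.simple '' X), ℓ u₀ ≤ ℓ (u₀ * y) := by
    intro y hy
    have h1 : u₀ * y = u * (x₀ * y) := by rw [hu₀def, mul_assoc]
    have h2 : ℓ u₀ = n₀ := by rw [hu₀def, hx₀']
    rw [h1, h2]
    exact hminall _ (Subgroup.mul_mem _ hx₀mem hy)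
  have hadd := deodhar_additive cs hu₀min
  have huu : u = u₀ * x₀⁻¹ := by rw [hu₀def]; group
  have hlu : ℓ u = ℓ u₀ + ℓ x₀⁻¹ := by
    rw [huu]
    exact hadd x₀⁻¹ (Subgroup.inv_mem _ hx₀mem)
  rcases eq_or_ne x₀⁻¹ 1 with hx1 | hx1
  · -- u = u₀ is minimal
    intro x hx
    have heq : u = u₀ := by rw [huu, hx1, mul_one]
    rw [heq]
    exact hu₀min x hx
  · exfalso
    obtain ⟨j, hjX, hdesc, hmem⟩ := exists_right_descent_X cs (Subgroup.inv_mem _ hx₀mem) hx1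
    have h1 : u * σ j = u₀ * (x₀⁻¹ * σ j) := by
      rw [huu, mul_assoc]
    have h2 : ℓ (u * σ j) = ℓ u₀ + ℓ (x₀⁻¹ * σ j) := by
      rw [h1]
      exact hadd _ (Subgroup.mul_mem _ (Subgroup.inv_mem _ hx₀mem)
        (Subgroup.subset_closure ⟨j, hjX, rfl⟩))
    have h3 := h j hjX
    omega

/-- Left-handed Deodhar additivity. -/
theorem deodhar_additive_left {X : Set B} {a : W}
    (hnd : ∀ j ∈ X, ℓ a < ℓ (σ j * a)) :
    ∀ v ∈ Subgroup.closure (cs.simple '' X), ℓ (v * a) = ℓ v + ℓ a := by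
  have hinv : ∀ j ∈ X, ℓ a⁻¹ < ℓ (a⁻¹ * σ j) := by
    intro j hj
    have h1 : ℓ (a⁻¹ * σ j) = ℓ (σ j * a) := by
      rw [← cs.length_inv (a⁻¹ * σ j), mul_inv_rev, inv_inv, cs.inv_simple]
    rw [h1, cs.length_inv]
    exact hnd j hj
  have hmin := min_of_no_descent cs hinv
  have hadd := deodhar_additive cs hmin
  intro v hv
  have h1 : ℓ (v * a) = ℓ (a⁻¹ * v⁻¹) := by
    rw [← cs.length_inv (v * a), mul_inv_rev]
  rw [h1, hadd v⁻¹ (Subgroup.inv_mem _ hv), cs.length_inv, cs.length_inv]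
  omega

/-! ### The dichotomy: multiplying a minimal coset representative by a simple reflection -/

/-- If `u` is minimal in `u W_X` and `i` is any simple index, then either
`σ i * u ∈ u W_X`, or `σ i * u` is itself minimal in its coset. -/
theorem simple_mul_min_dichotomy {X : Set B} {u : W} (i : B)
    (hmin : ∀ x ∈ Subgroup.closure (cs.simple '' X), ℓ u ≤ ℓ (u * x)) :
    (∃ x ∈ Subgroup.closure (cs.simple '' X), σ i * u = u * x) ∨
    (∀ x ∈ Subgroup.closure (cs.simple '' X), ℓ (σ i * u) ≤ ℓ (σ i * u * x)) := by
  by_cases hdesc : ∃ j ∈ X, ℓ (σ i * u * σ j) < ℓ (σ i * u)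
  · obtain ⟨j, hjX, hj⟩ := hdesc
    have hjmem : σ j ∈ Subgroup.closure (cs.simple '' X) :=
      Subgroup.subset_closure ⟨j, hjX, rfl⟩
    have husj : ℓ (u * σ j) = ℓ u + 1 := by
      have h1 := hmin (σ j) hjmem
      rcases cs.length_mul_simple u j with h | h
      · exact h
      · omega
    rcases cs.length_simple_mul u i with hA | hB
    · -- ℓ(σ i * u) = ℓ u + 1
      left
      obtain ⟨ω_u, hredu, hωu⟩ := cs.exists_reduced_word' u
      have hπ : π (ω_u ++ [j]) = u * σ j := by
        rw [cs.wordProd_append, cs.wordProd_singleton, ← hωu]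
      have hlt : ℓ (σ i * (u * σ j)) < ℓ (u * σ j) := by
        have h2 : σ i * (u * σ j) = (σ i * u) * σ j := by rw [mul_assoc]
        rw [h2, husj]
        omega
      obtain ⟨p, hp, herase⟩ := strongExchange_left_erase cs (cs.isReflection_simple i)
        hπ hlt
      rw [List.length_append, List.length_singleton] at hp
      by_cases hpcase : p < ω_u.length
      · exfalso
        rw [List.eraseIdx_append_of_lt_length hpcase, cs.wordProd_append,
          cs.wordProd_singleton] at herase
        have h3 : σ i * u = π (ω_u.eraseIdx p) := by
          have h4 : σ i * (u * σ j) * σ j = π (ω_u.eraseIdx p) * σ j * σ j := by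
            rw [herase]
          rw [mul_assoc, mul_assoc, cs.simple_mul_simple_self, mul_one,
            mul_assoc, cs.simple_mul_simple_self, mul_one] at h4
          exact h4
        have h5 : ℓ (σ i * u) ≤ (ω_u.eraseIdx p).length := by
          rw [h3]
          exact cs.length_wordProd_le _
        have h6 : (ω_u.eraseIdx p).length = ω_u.length - 1 := by
          rw [List.length_eraseIdx, if_pos hpcase]
        have h7 : ω_u.length = ℓ u := by rw [← hredu, hωu]
        omega
      · push_neg at hpcase
        rw [List.eraseIdx_append_of_length_le hpcase, cs.wordProd_append] at herase
        have h8 : ([j].eraseIdx (p - ω_u.length)) = [] := by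
          have : p - ω_u.length = 0 := by omega
          rw [this]
          rfl
        rw [h8, cs.wordProd_nil, mul_one] at herase
        rw [hωu] at herase
        refine ⟨σ j, hjmem, ?_⟩
        have h9 : σ i * (π ω_u * σ j) * σ j = σ i * π ω_u := by
          rw [mul_assoc (σ i) (π ω_u * σ j), mul_assoc (π ω_u), cs.simple_mul_simple_self,
            mul_one]
        rw [hωu, ← h9, herase]
    · -- ℓ(σ i * u) + 1 = ℓ u : impossible
      exfalso
      have h10 : u * σ j = σ i * (σ i * u * σ j) := by
        rw [← mul_assoc, ← mul_assoc, cs.simple_mul_simple_self, one_mul]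
      have h11 : ℓ (u * σ j) ≤ ℓ (σ i * u * σ j) + 1 := by
        rcases cs.length_simple_mul (σ i * u * σ j) i with h | h
        · rw [← h10] at h; omega
        · rw [← h10] at h; omega
      omega
  · right
    push_neg at hdesc
    apply min_of_no_descent
    intro j hjX
    have h1 := hdesc j hjX
    have h2 := cs.length_mul_simple_ne (σ i * u) j
    omega

end cox
end RW

open scoped Pointwise


/-!
Part (ii) of the lemma of Richarz/Waldspurger: given the function `w ↦ w^X`
taking each element to the unique minimal-length representative of its coset
`w W_X`, and a finite standard parabolic subgroup `W_{X'}`, the set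
`{(v w)^X : v ∈ W_{X'}}` contains a unique element of maximal length.
-/

open RW

/-- **Richarz/Waldspurger, part (ii)**: let `(W, S)` be a Coxeter system with
length function `ℓ`, let `X, X' ⊆ S`, and let `minRep : W → W` send each `w` to
the unique element `w^X` of minimal length in the coset `w W_X`.  If the
standard parabolic subgroup `W_{X'}` is finite, then for every `w ∈ W` the set
`{(v w)^X : v ∈ W_{X'}}` contains a unique element of maximal length. -/
theorem exists_unique_max_length_double_coset_rep
    {B : Type*} {W : Type*} [Group W] {M : CoxeterMatrix B}
    (cs : CoxeterSystem M W) (X X' : Set B)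
    (hfin : ((Subgroup.closure (cs.simple '' X') : Subgroup W) : Set W).Finite)
    (minRep : W → W)
    (hmem : ∀ w : W,
      minRep w ∈ w • ((Subgroup.closure (cs.simple '' X) : Subgroup W) : Set W))
    (hmin : ∀ w : W,
      ∀ v ∈ w • ((Subgroup.closure (cs.simple '' X) : Subgroup W) : Set W),
        cs.length (minRep w) ≤ cs.length v)
    (w : W) :
    ∃! u : W,
      u ∈ { x : W | ∃ v ∈ (Subgroup.closure (cs.simple '' X') : Subgroup W),
              x = minRep (v * w) } ∧
      ∀ u' ∈ { x : W | ∃ v ∈ (Subgroup.closure (cs.simple '' X') : Subgroup W),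
              x = minRep (v * w) },
        cs.length u' ≤ cs.length u := by
  classical
  -- membership translations
  have hmem' : ∀ v : W, v⁻¹ * minRep v ∈ Subgroup.closure (cs.simple '' X) := by
    intro v
    have h := hmem v
    rwa [Set.mem_smul_set_iff_inv_smul_mem, smul_eq_mul] at h
  have hmin' : ∀ v z : W, v⁻¹ * z ∈ Subgroup.closure (cs.simple '' X) →
      cs.length (minRep v) ≤ cs.length z := by
    intro v z hz
    apply hmin v
    rw [Set.mem_smul_set_iff_inv_smul_mem, smul_eq_mul]
    exact hz
  have hminmin : ∀ v : W, ∀ x ∈ Subgroup.closure (cs.simple '' X),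
      cs.length (minRep v) ≤ cs.length (minRep v * x) := by
    intro v x hx
    apply hmin' v
    have h1 : v⁻¹ * (minRep v * x) = (v⁻¹ * minRep v) * x := by group
    rw [h1]
    exact Subgroup.mul_mem _ (hmem' v) hx
  have hcongr : ∀ v z : W, v⁻¹ * z ∈ Subgroup.closure (cs.simple '' X) →
      minRep v = minRep z := by
    intro v z hvz
    refine min_coset_unique cs ?_ (hminmin v) (hminmin z)
    have h1 : (minRep v)⁻¹ * minRep z
        = (v⁻¹ * minRep v)⁻¹ * ((v⁻¹ * z) * (z⁻¹ * minRep z)) := by group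
    rw [h1]
    exact Subgroup.mul_mem _ (Subgroup.inv_mem _ (hmem' v))
      (Subgroup.mul_mem _ hvz (hmem' z))
  -- the set U
  set U := { x : W | ∃ v ∈ (Subgroup.closure (cs.simple '' X') : Subgroup W),
      x = minRep (v * w) } with hUdef
  have hUsub : U ⊆ (fun p => minRep (p * w)) ''
      ((Subgroup.closure (cs.simple '' X') : Subgroup W) : Set W) := by
    rintro x ⟨v, hv, rfl⟩
    exact ⟨v, hv, rfl⟩
  have hUfin : U.Finite := (hfin.image _).subset hUsub
  have hUne : U.Nonempty := ⟨minRep w, 1, Subgroup.one_mem _, by rw [one_mul]⟩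
  -- minimal element a of U
  obtain ⟨a, haU, hamin⟩ := Set.exists_min_image U cs.length hUfin hUne
  obtain ⟨va, hva, hadef⟩ := haU
  have haU' : a ∈ U := ⟨va, hva, hadef⟩
  have hacoset : (va * w)⁻¹ * a ∈ Subgroup.closure (cs.simple '' X) := by
    rw [hadef]
    exact hmem' (va * w)
  have hamin' : ∀ x ∈ Subgroup.closure (cs.simple '' X), cs.length a ≤ cs.length (a * x) := by
    intro x hx
    rw [hadef]
    exact hminmin (va * w) x hx
  -- membership in U of reduced reps of shifted cosets
  have hUmem : ∀ p ∈ Subgroup.closure (cs.simple '' X'), minRep (p * (va * w)) ∈ U := by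
    intro p hp
    refine ⟨p * va, Subgroup.mul_mem _ hp hva, ?_⟩
    have h1 : (p * va * w)⁻¹ * (p * (va * w)) = 1 := by group
    have h2 : minRep (p * va * w) = minRep (p * (va * w)) := by
      apply hcongr
      rw [h1]
      exact Subgroup.one_mem _
    rw [h2]
  -- a has no left X'-descents
  have hFa : ∀ i ∈ X', cs.length a < cs.length (cs.simple i * a) := by
    intro i hi
    have hne := cs.length_simple_mul_ne a i
    rcases simple_mul_min_dichotomy cs (X := X) i hamin' with ⟨x, hx, hsx⟩ | hminsi
    · have h1 : cs.length a ≤ cs.length (a * x) := hamin' x hx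
      have h2 : cs.length (cs.simple i * a) = cs.length (a * x) := by rw [hsx]
      omega
    · -- σ i * a is minimal, hence equals minRep (σ i * a) ∈ U
      have heq : minRep (cs.simple i * a) = cs.simple i * a := by
        refine min_coset_unique cs ?_ (hminmin _) hminsi
        have h3 : (minRep (cs.simple i * a))⁻¹ * (cs.simple i * a)
            = ((cs.simple i * a)⁻¹ * minRep (cs.simple i * a))⁻¹ := by group
        rw [h3]
        exact Subgroup.inv_mem _ (hmem' _)
      have hmemU : cs.simple i * a ∈ U := by
        rw [← heq]
        have h4 : minRep (cs.simple i * a) = minRep ((cs.simple i) * (va * w)) := by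
          apply hcongr
          have h5 : (cs.simple i * a)⁻¹ * (cs.simple i * (va * w))
              = (a⁻¹ * (va * w)) := by group
          rw [h5, hadef]
          have h6 : (minRep (va * w))⁻¹ * (va * w)
              = ((va * w)⁻¹ * minRep (va * w))⁻¹ := by group
          rw [h6]
          exact Subgroup.inv_mem _ (hmem' _)
        rw [h4]
        exact hUmem _ (Subgroup.subset_closure ⟨i, hi, rfl⟩)
      have h7 := hamin _ hmemU
      omega
  -- left additivity over W_{X'}
  have hA : ∀ v ∈ Subgroup.closure (cs.simple '' X'), cs.length (v * a) = cs.length v + cs.length a :=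
    deodhar_additive_left cs hFa
  -- the stabilizer-like predicate
  set HP : W → Prop := fun h => h ∈ Subgroup.closure (cs.simple '' X') ∧
      a⁻¹ * (h * a) ∈ Subgroup.closure (cs.simple '' X) with hHPdef
  have hHP1 : HP 1 := by
    constructor
    · exact Subgroup.one_mem _
    · have : a⁻¹ * (1 * a) = 1 := by group
      rw [this]
      exact Subgroup.one_mem _
  have hHPmul : ∀ h₁ h₂, HP h₁ → HP h₂ → HP (h₁ * h₂) := by
    intro h₁ h₂ hh₁ hh₂
    constructor
    · exact Subgroup.mul_mem _ hh₁.1 hh₂.1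
    · have : a⁻¹ * (h₁ * h₂ * a) = (a⁻¹ * (h₁ * a)) * (a⁻¹ * (h₂ * a)) := by group
      rw [this]
      exact Subgroup.mul_mem _ hh₁.2 hh₂.2
  have hHPinv : ∀ h, HP h → HP h⁻¹ := by
    intro h hh
    constructor
    · exact Subgroup.inv_mem _ hh.1
    · have : a⁻¹ * (h⁻¹ * a) = (a⁻¹ * (h * a))⁻¹ := by group
      rw [this]
      exact Subgroup.inv_mem _ hh.2
  -- G3: if v is minimal in v·H then v*a is minimal in its W_X coset
  have hG3 : ∀ n v, v ∈ Subgroup.closure (cs.simple '' X') → cs.length v = n →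
      (∀ h, HP h → cs.length v ≤ cs.length (v * h)) →
      (∀ x ∈ Subgroup.closure (cs.simple '' X), cs.length (v * a) ≤ cs.length (v * a * x)) := by
    intro n
    induction n using Nat.strong_induction_on with
    | _ n IH =>
      intro v hv hlv hvmin
      rcases eq_or_ne v 1 with rfl | hne
      · intro x hx
        rw [one_mul]
        exact hamin' x hx
      · obtain ⟨i, hiX, hlen, hmem2⟩ := exists_left_descent_X cs hv hne
        set v' := cs.simple i * v with hv'def
        have hvv : v = cs.simple i * v' := by
          rw [hv'def, cs.simple_mul_simple_cancel_left]
        have hv'min : ∀ h, HP h → cs.length v' ≤ cs.length (v' * h) := by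
          intro h hh
          by_contra hc
          push_neg at hc
          have h2 : v * h = cs.simple i * (v' * h) := by rw [hvv]; group
          have h3 : cs.length (v * h) ≤ cs.length (v' * h) + 1 := by
            rcases cs.length_simple_mul (v' * h) i with hcc | hcc
            · rw [← h2] at hcc; omega
            · rw [← h2] at hcc; omega
          have h4 := hvmin h hh
          omega
        have hIH := IH (cs.length v') (by omega) v' hmem2 rfl hv'min
        rcases simple_mul_min_dichotomy cs (X := X) i hIH with ⟨x, hx, hsx⟩ | hminres
        · exfalso
          have hh₀ : HP (v'⁻¹ * v) := by
            constructor
            · exact Subgroup.mul_mem _ (Subgroup.inv_mem _ hmem2) hv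
            · have h5 : x = (v' * a)⁻¹ * (cs.simple i * (v' * a)) := by rw [hsx]; group
              have h4 : a⁻¹ * ((v'⁻¹ * v) * a) = x := by
                rw [h5, hvv]
                group
              rw [h4]
              exact hx
          have h6 := hvmin _ (hHPinv _ hh₀)
          have h7 : v * (v'⁻¹ * v)⁻¹ = v' := by group
          rw [h7] at h6
          omega
        · intro x hx
          have h8 : v * a = cs.simple i * (v' * a) := by rw [hvv]; group
          rw [h8]
          exact hminres x hx
  -- uniqueness of minimal elements of H-cosets
  have hUminH : ∀ v₁ v₂, v₁ ∈ Subgroup.closure (cs.simple '' X') →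
      v₂ ∈ Subgroup.closure (cs.simple '' X') → HP (v₁⁻¹ * v₂) →
      (∀ h, HP h → cs.length v₁ ≤ cs.length (v₁ * h)) → (∀ h, HP h → cs.length v₂ ≤ cs.length (v₂ * h)) → v₁ = v₂ := by
    intro v₁ v₂ h1 h2 hcos hm1 hm2
    have e1 := hG3 _ v₁ h1 rfl hm1
    have e2 := hG3 _ v₂ h2 rfl hm2
    have hcc : (v₁ * a)⁻¹ * (v₂ * a) ∈ Subgroup.closure (cs.simple '' X) := by
      have h3 : (v₁ * a)⁻¹ * (v₂ * a) = a⁻¹ * ((v₁⁻¹ * v₂) * a) := by group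
      rw [h3]
      exact hcos.2
    have h4 := min_coset_unique cs hcc e1 e2
    exact mul_right_cancel h4
  -- additivity over H for H-minimal elements
  have hHadd : ∀ v, v ∈ Subgroup.closure (cs.simple '' X') →
      (∀ h, HP h → cs.length v ≤ cs.length (v * h)) → ∀ h, HP h → cs.length (v * h) = cs.length v + cs.length h := by
    intro v hv hvmin h hh
    set xh := a⁻¹ * (h * a) with hxhdef
    have hxh : xh ∈ Subgroup.closure (cs.simple '' X) := hh.2
    have e1 : cs.length (h * a) = cs.length h + cs.length a := hA h hh.1
    have e2 : cs.length (a * xh) = cs.length a + cs.length xh := deodhar_additive cs hamin' xh hxh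
    have hha : h * a = a * xh := by rw [hxhdef]; group
    have e3 : cs.length xh = cs.length h := by rw [hha] at e1; omega
    have e4 : cs.length (v * h * a) = cs.length (v * h) + cs.length a := hA (v * h) (Subgroup.mul_mem _ hv hh.1)
    have e5 : v * h * a = (v * a) * xh := by rw [hxhdef]; group
    have e6 : cs.length ((v * a) * xh) = cs.length (v * a) + cs.length xh :=
      deodhar_additive cs (hG3 _ v hv rfl hvmin) xh hxh
    have e7 : cs.length (v * a) = cs.length v + cs.length a := hA v hv
    rw [e5] at e4
    omega
  -- the longest element of W_{X'}
  obtain ⟨w₀, hw₀mem, hw₀max⟩ := Set.exists_max_image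
    ((Subgroup.closure (cs.simple '' X') : Subgroup W) : Set W) cs.length hfin
    ⟨1, Subgroup.one_mem _⟩
  -- W4 : ℓ(w₀ p) + cs.length p = cs.length w₀
  have hW4 : ∀ n p, p ∈ Subgroup.closure (cs.simple '' X') → cs.length p = n →
      cs.length (w₀ * p) + cs.length p = cs.length w₀ := by
    intro n
    induction n using Nat.strong_induction_on with
    | _ n IH =>
      intro p hp hlp
      rcases eq_or_ne p 1 with rfl | hne
      · simp
      · obtain ⟨j, hjX, hdesc, hpσ⟩ := exists_right_descent_X cs hp hne
        set p' := p * cs.simple j with hp'def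
        have hpp : p' * cs.simple j = p := by
          rw [hp'def, cs.simple_mul_simple_cancel_right]
        have hIH : cs.length (w₀ * p') + cs.length p' = cs.length w₀ := IH (cs.length p') (by omega) p' hpσ rfl
        rcases cs.length_mul_simple (w₀ * p') j with hc | hc
        · -- ascent: contradiction via lifting
          exfalso
          have hE1 : cs.length ((w₀ * p') * p'⁻¹) = cs.length (w₀ * p') + cs.length p'⁻¹ := by
            have h9 : (w₀ * p') * p'⁻¹ = w₀ := by group
            rw [h9, cs.length_inv]
            omega
          have hE2 : cs.length (w₀ * p') < cs.length ((w₀ * p') * cs.simple j) := by omega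
          have hE3 : cs.length p'⁻¹ < cs.length (cs.simple j * p'⁻¹) := by
            have h9 : cs.simple j * p'⁻¹ = p⁻¹ := by
              rw [hp'def, mul_inv_rev, cs.inv_simple, ← mul_assoc,
                cs.simple_mul_simple_self, one_mul]
            rw [h9, cs.length_inv, cs.length_inv]
            omega
          have hlift := lifting cs hE1 hE2 hE3
          have hmem3 : (w₀ * p') * cs.simple j * p'⁻¹ ∈
              Subgroup.closure (cs.simple '' X') := by
            refine Subgroup.mul_mem _ (Subgroup.mul_mem _ (Subgroup.mul_mem _ hw₀mem hpσ)
              (Subgroup.subset_closure ⟨j, hjX, rfl⟩)) (Subgroup.inv_mem _ hpσ)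
          have h10 := hw₀max _ hmem3
          rw [cs.length_inv] at hlift
          omega
        · have h10 : w₀ * p = (w₀ * p') * cs.simple j := by rw [mul_assoc, hpp]
          rw [h10]
          omega
  -- the maximal-length element of H
  have hHsub : {h : W | HP h} ⊆ ((Subgroup.closure (cs.simple '' X') : Subgroup W) : Set W) :=
    fun h hh => hh.1
  obtain ⟨h₀, hh₀, hh₀max⟩ := Set.exists_max_image {h : W | HP h} cs.length (hfin.subset hHsub)
    ⟨1, hHP1⟩
  -- (*): length of the minimal element of the coset (w₀ v)·H
  have hstar : ∀ v, v ∈ Subgroup.closure (cs.simple '' X') →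
      (∀ h, HP h → cs.length v ≤ cs.length (v * h)) →
      ∃ z, HP ((w₀ * v)⁻¹ * z) ∧ cs.length z + cs.length v + cs.length h₀ = cs.length w₀ := by
    intro v hv hvmin
    set T := {q : W | q ∈ Subgroup.closure (cs.simple '' X') ∧ HP ((w₀ * v)⁻¹ * q)}
      with hTdef
    have hTsub : T ⊆ ((Subgroup.closure (cs.simple '' X') : Subgroup W) : Set W) :=
      fun q hq => hq.1
    have hTne : T.Nonempty := by
      refine ⟨w₀ * v, Subgroup.mul_mem _ hw₀mem hv, ?_⟩
      have : (w₀ * v)⁻¹ * (w₀ * v) = 1 := by group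
      rw [this]
      exact hHP1
    obtain ⟨z, hzT, hzmin⟩ := Set.exists_min_image T cs.length (hfin.subset hTsub) hTne
    set hz := (w₀ * v)⁻¹ * z with hhzdef
    have hHPz : HP hz := hzT.2
    have hzeq : z = w₀ * (v * hz) := by rw [hhzdef]; group
    have hz1 : cs.length z + cs.length (v * hz) = cs.length w₀ := by
      rw [hzeq]
      exact hW4 _ _ (Subgroup.mul_mem _ hv hHPz.1) rfl
    have hz2 : cs.length (v * hz) = cs.length v + cs.length hz := hHadd v hv hvmin hz hHPz
    -- compare with the element w₀ * (v * h₀)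
    have hq0 : w₀ * (v * h₀) ∈ T := by
      constructor
      · exact Subgroup.mul_mem _ hw₀mem (Subgroup.mul_mem _ hv hh₀.1)
      · have : (w₀ * v)⁻¹ * (w₀ * (v * h₀)) = h₀ := by group
        rw [this]
        exact hh₀
    have hq1 : cs.length z ≤ cs.length (w₀ * (v * h₀)) := hzmin _ hq0
    have hq2 : cs.length (w₀ * (v * h₀)) + cs.length (v * h₀) = cs.length w₀ :=
      hW4 _ _ (Subgroup.mul_mem _ hv hh₀.1) rfl
    have hq3 : cs.length (v * h₀) = cs.length v + cs.length h₀ := hHadd v hv hvmin h₀ hh₀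
    have hq4 : cs.length hz ≤ cs.length h₀ := hh₀max _ hHPz
    refine ⟨z, hzT.2, ?_⟩
    omega
  -- construction of H-minimal representative for a maximal element of U
  have hVU : ∀ u, u ∈ U → (∀ z ∈ U, cs.length z ≤ cs.length u) →
      ∃ v, v ∈ Subgroup.closure (cs.simple '' X') ∧ u = v * a ∧
        (∀ h, HP h → cs.length v ≤ cs.length (v * h)) ∧
        (∀ p, p ∈ Subgroup.closure (cs.simple '' X') →
          (∀ h, HP h → cs.length p ≤ cs.length (p * h)) → cs.length p ≤ cs.length v) := by
    rintro u ⟨vu, hvu, hudef⟩ humax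
    have hucoset : (vu * w)⁻¹ * u ∈ Subgroup.closure (cs.simple '' X) := by
      rw [hudef]
      exact hmem' _
    have humin : ∀ x ∈ Subgroup.closure (cs.simple '' X), cs.length u ≤ cs.length (u * x) := by
      intro x hx
      rw [hudef]
      exact hminmin _ x hx
    set S := {p : W | p ∈ Subgroup.closure (cs.simple '' X') ∧
        (p * a)⁻¹ * u ∈ Subgroup.closure (cs.simple '' X)} with hSdef
    have hSsub : S ⊆ ((Subgroup.closure (cs.simple '' X') : Subgroup W) : Set W) :=
      fun q hq => hq.1
    have hSne : S.Nonempty := by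
      refine ⟨vu * va⁻¹, Subgroup.mul_mem _ hvu (Subgroup.inv_mem _ hva), ?_⟩
      have h1 : ((vu * va⁻¹) * a)⁻¹ * u
          = ((va * w)⁻¹ * a)⁻¹ * ((vu * w)⁻¹ * u) := by group
      rw [h1]
      exact Subgroup.mul_mem _ (Subgroup.inv_mem _ hacoset) hucoset
    obtain ⟨v, hvS, hvmin⟩ := Set.exists_min_image S cs.length (hfin.subset hSsub) hSne
    have hvW' : v ∈ Subgroup.closure (cs.simple '' X') := hvS.1
    have hvcos : (v * a)⁻¹ * u ∈ Subgroup.closure (cs.simple '' X) := hvS.2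
    have hvHmin : ∀ h, HP h → cs.length v ≤ cs.length (v * h) := by
      intro h hh
      refine hvmin _ ⟨Subgroup.mul_mem _ hvW' hh.1, ?_⟩
      have h1 : ((v * h) * a)⁻¹ * u = (a⁻¹ * (h * a))⁻¹ * ((v * a)⁻¹ * u) := by group
      rw [h1]
      exact Subgroup.mul_mem _ (Subgroup.inv_mem _ hh.2) hvcos
    have hueq : v * a = u :=
      min_coset_unique cs hvcos (hG3 _ v hvW' rfl hvHmin) humin
    refine ⟨v, hvW', hueq.symm, hvHmin, ?_⟩
    -- λmax
    intro p hp hpHmin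
    have hpaU : p * a ∈ U := by
      have h1 : minRep (p * (va * w)) = p * a := by
        refine min_coset_unique cs ?_ (hminmin _) (hG3 _ p hp rfl hpHmin)
        have h2 : (minRep (p * (va * w)))⁻¹ * (p * a)
            = ((p * (va * w))⁻¹ * minRep (p * (va * w)))⁻¹ *
              ((va * w)⁻¹ * a) := by group
        rw [h2]
        exact Subgroup.mul_mem _ (Subgroup.inv_mem _ (hmem' _)) hacoset
      rw [← h1]
      exact hUmem p hp
    have h3 := humax _ hpaU
    have h4 : cs.length (p * a) = cs.length p + cs.length a := hA p hp
    have h5 : cs.length (v * a) = cs.length v + cs.length a := hA v hvW'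
    rw [hueq] at h5
    omega
  -- uniqueness of maximal elements of U
  have hkey : ∀ u₁ u₂, u₁ ∈ U → u₂ ∈ U → (∀ z ∈ U, cs.length z ≤ cs.length u₁) →
      (∀ z ∈ U, cs.length z ≤ cs.length u₂) → u₁ = u₂ := by
    intro u₁ u₂ hu₁ hu₂ hm₁ hm₂
    obtain ⟨v₁, hv₁, hu₁eq, hv₁min, hlam1⟩ := hVU u₁ hu₁ hm₁
    obtain ⟨v₂, hv₂, hu₂eq, hv₂min, hlam2⟩ := hVU u₂ hu₂ hm₂
    -- the coset C₀ of w₀⁻¹ and its minimal element v₀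
    set C₀ := {q : W | q ∈ Subgroup.closure (cs.simple '' X') ∧ HP (w₀ * q)} with hC₀def
    have hC₀sub : C₀ ⊆ ((Subgroup.closure (cs.simple '' X') : Subgroup W) : Set W) :=
      fun q hq => hq.1
    have hC₀ne : C₀.Nonempty := by
      refine ⟨w₀⁻¹, Subgroup.inv_mem _ hw₀mem, ?_⟩
      have : w₀ * w₀⁻¹ = 1 := by group
      rw [this]
      exact hHP1
    obtain ⟨v₀, hv₀C, hv₀min⟩ := Set.exists_min_image C₀ cs.length (hfin.subset hC₀sub) hC₀ne
    have hv₀W' : v₀ ∈ Subgroup.closure (cs.simple '' X') := hv₀C.1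
    have hv₀Hmin : ∀ h, HP h → cs.length v₀ ≤ cs.length (v₀ * h) := by
      intro h hh
      refine hv₀min _ ⟨Subgroup.mul_mem _ hv₀W' hh.1, ?_⟩
      have h1 : w₀ * (v₀ * h) = (w₀ * v₀) * h := by group
      rw [h1]
      exact hHPmul _ _ hv₀C.2 hh
    -- cs.length v₀ + cs.length h₀ = cs.length w₀
    obtain ⟨z₀, hz₀HP, hz₀len⟩ := hstar v₀ hv₀W' hv₀Hmin
    have hz₀0 : cs.length z₀ = 0 := by
      -- z₀ is some element with HP ((w₀ v₀)⁻¹ z₀) and the stated length identity.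
      -- We instead bound: cs.length z₀ + cs.length v₀ + cs.length h₀ = cs.length w₀ and we show cs.length w₀ ≤ cs.length v₀ + cs.length h₀.
      have h1 : HP (w₀ * v₀) := hv₀C.2
      have h2 : cs.length (v₀ * (w₀ * v₀)) = cs.length v₀ + cs.length (w₀ * v₀) :=
        hHadd v₀ hv₀W' hv₀Hmin _ h1
      have h3 : cs.length (w₀ * v₀) ≤ cs.length h₀ := hh₀max _ h1
      have h4 : cs.length w₀ ≤ cs.length (w₀ * v₀) + cs.length v₀ := by
        have h5 := cs.length_mul_le (w₀ * v₀) v₀⁻¹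
        have h6 : (w₀ * v₀) * v₀⁻¹ = w₀ := by group
        rw [h6, cs.length_inv] at h5
        exact h5
      omega
    have hz₀1 : cs.length w₀ = cs.length v₀ + cs.length h₀ := by omega
    -- for each k, the minimal element of (w₀ vₖ)·H has length 0
    have hfinal : ∀ v, v ∈ Subgroup.closure (cs.simple '' X') →
        (∀ h, HP h → cs.length v ≤ cs.length (v * h)) →
        (∀ p, p ∈ Subgroup.closure (cs.simple '' X') →
          (∀ h, HP h → cs.length p ≤ cs.length (p * h)) → cs.length p ≤ cs.length v) → HP (w₀ * v) := by
      intro v hv hvHmin hlam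
      obtain ⟨z, hzHP, hzlen⟩ := hstar v hv hvHmin
      have h1 : cs.length v₀ ≤ cs.length v := hlam v₀ hv₀W' hv₀Hmin
      have h2 : cs.length z = 0 := by omega
      have h3 : z = 1 := cs.length_eq_zero_iff.mp h2
      rw [h3] at hzHP
      have h4 : (w₀ * v)⁻¹ * 1 = (w₀ * v)⁻¹ := by group
      rw [h4] at hzHP
      have h5 := hHPinv _ hzHP
      rwa [inv_inv] at h5
    have hHP1' := hfinal v₁ hv₁ hv₁min hlam1
    have hHP2' := hfinal v₂ hv₂ hv₂min hlam2
    have hHP12 : HP (v₁⁻¹ * v₂) := by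
      have h1 := hHPmul _ _ (hHPinv _ hHP1') hHP2'
      have h2 : (w₀ * v₁)⁻¹ * (w₀ * v₂) = v₁⁻¹ * v₂ := by group
      rwa [h2] at h1
    have := hUminH v₁ v₂ hv₁ hv₂ hHP12 hv₁min hv₂min
    rw [hu₁eq, hu₂eq, this]
  -- existence + uniqueness
  obtain ⟨umax, humaxU, humax⟩ := Set.exists_max_image U cs.length hUfin hUne
  refine ⟨umax, ⟨humaxU, fun u' hu' => humax u' hu'⟩, ?_⟩
  rintro u₁ ⟨hu₁U, hu₁max⟩
  exact hkey u₁ umax hu₁U humaxU hu₁max humax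
end

section
/- Let R be a commutative ring in which 2 is invertible, let π₀ ∈ R, and let J = [[0, −1],[1, 0]] ∈ M₂(R). Then a matrix X ∈ M₂(R) satisfies the three conditions X² = π₀·I, ᵀX = −J·X·J, and charpoly(X) = T² − π₀ simultaneously if and only if X = 0 and π₀ = 0 in R. (Consequently, the affine chart U_{1,1} of the naive local model for the ramified quasi-split unitary group GU₂ with signature (1,1) at the special maximal parahoric subgroup is Spec k, the source of the extraneous non-flat component Spec k in M^{naive} ≅ P¹ ⊔ Spec k computed in the paper's Remark on GU₂.) -/
/-!
The affine chart `U_{1,1}` of the naive local model for the ramified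
quasi-split unitary group `GU₂` with signature `(1,1)` at the special maximal
parahoric subgroup: the matrix equations `X² = π₀·I`, `ᵀX = −J·X·J`,
`charpoly(X) = T² − π₀` have only the solution `X = 0` (and force `π₀ = 0`),
giving the extraneous non-flat component `Spec k` of
`M^naive ≅ P¹ ⊔ Spec k`.
-/

open scoped Matrix

/-- The characteristic polynomial of a `2 × 2` matrix. -/
lemma charpoly_fin_two_aux {R : Type*} [CommRing R] (M : Matrix (Fin 2) (Fin 2) R) :
    M.charpoly = Polynomial.X ^ 2 - Polynomial.C M.trace * Polynomial.X + Polynomial.C M.det := by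
  rw [Matrix.charpoly, Matrix.det_fin_two]
  simp [Matrix.charmatrix_apply, Matrix.trace_fin_two, Matrix.det_fin_two]
  ring

/-- A `2 × 2` matrix `X` over a commutative ring in which `2` is invertible
satisfies `X² = π₀·I`, `ᵀX = −J·X·J` (with `J = [[0,−1],[1,0]]`) and
`charpoly(X) = T² − π₀` if and only if `X = 0` and `π₀ = 0`. -/
theorem gu2_special_parahoric_chart (R : Type*) [CommRing R] (h2 : IsUnit (2 : R)) (π₀ : R)
    (X : Matrix (Fin 2) (Fin 2) R) :
    (X * X = π₀ • (1 : Matrix (Fin 2) (Fin 2) R) ∧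
     Xᵀ = -(!![(0 : R), -1; 1, 0] * X * !![(0 : R), -1; 1, 0]) ∧
     X.charpoly = Polynomial.X ^ 2 - Polynomial.C π₀) ↔
    (X = 0 ∧ π₀ = 0) := by
  constructor
  · rintro ⟨h1, hJ, h3⟩
    rw [← Matrix.etaExpand_eq X] at hJ
    simp [Matrix.etaExpand, Matrix.mul_fin_two, FinVec.etaExpand, Matrix.vecHead,
      Matrix.vecTail, ← Matrix.ext_iff, Fin.forall_fin_two] at hJ
    obtain ⟨⟨had, hc⟩, hb, -⟩ := hJ
    have hb0 : X 0 1 = 0 := h2.mul_right_eq_zero.mp (by linear_combination hb)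
    have hc0 : X 1 0 = 0 := h2.mul_right_eq_zero.mp (by linear_combination hc)
    -- trace = 0 from the characteristic polynomial
    have hcp : Polynomial.X ^ 2 - Polynomial.C X.trace * Polynomial.X + Polynomial.C X.det
        = Polynomial.X ^ 2 - Polynomial.C π₀ := by
      rw [← charpoly_fin_two_aux]; exact h3
    have htr : X.trace = 0 := by
      have := congrArg (fun p => Polynomial.coeff p 1) hcp
      simpa using this
    have ha0 : X 0 0 = 0 := by
      refine h2.mul_right_eq_zero.mp ?_
      rw [Matrix.trace_fin_two, ← had] at htr
      linear_combination htr
    have hX : X = 0 := by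
      ext i j
      fin_cases i <;> fin_cases j <;>
        simp [ha0, hb0, hc0, ← had]
    refine ⟨hX, ?_⟩
    have := congrFun (congrFun h1 0) 0
    simp [hX] at this
    simpa using this.symm
  · rintro ⟨rfl, rfl⟩
    refine ⟨by simp, by simp, ?_⟩
    simp [charpoly_fin_two_aux]
end
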